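/- The subsemigroup of (^ωω, ∘) generated by all replacements [i|j], all transpositions [i,j], the successor function suc, and the function pred (with pred(0)=0, pred(n+1)=n) is a rich semigroup: it is closed under τ ↦ τ[i|j], contains σ = suc and π = pred with π ∘ σ = Id and Rg σ ≠ ω, and is closed under τ ↦ (σ ∘ τ ∘ π)[(ω ∖ Rg σ)|Id]. -/

import Mathlib

/-- The successor function on ω. -/
def suc : Function.End ℕ := fun n => n + 1

/-- The predecessor function on ω (pred 0 = 0). -/
def pred : Function.End ℕ := fun n => n - 1

/-- The replacement [i|j]. -/
def repl (i j : ℕ) : Function.End ℕ := fun k => if k = i then j else k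

/-- The generating set: all replacements, all transpositions, suc and pred. -/
def genset : Set (Function.End ℕ) :=
  {f | (∃ i j, f = repl i j) ∨ (∃ i j, f = ⇑(Equiv.swap i j)) ∨ f = suc ∨ f = pred}

/-- The subsemigroup of (^ωω, ∘) generated by replacements, transpositions,
suc and pred. -/
def richSg : Subsemigroup (Function.End ℕ) := Subsemigroup.closure genset

/-- The "shift" of τ: 0 ↦ 0 and k+1 ↦ τ k + 1. -/
def shf (τ : Function.End ℕ) : Function.End ℕ :=
  fun k => if k = 0 then 0 else τ (k - 1) + 1

lemma shf_mul (τ ρ : Function.End ℕ) : shf (τ * ρ) = shf τ * shf ρ := by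
  funext k
  simp only [Function.End.mul_def, Function.comp_apply, shf]
  rcases k with _ | m
  · simp [Function.comp, shf]
  · simp [Nat.succ_ne_zero, Function.comp, shf]

lemma mem_richSg_of_genset {f : Function.End ℕ} (h : f ∈ genset) : f ∈ richSg :=
  Subsemigroup.subset_closure h

lemma repl_mem (i j : ℕ) : repl i j ∈ richSg :=
  mem_richSg_of_genset (Or.inl ⟨i, j, rfl⟩)

lemma swap_mem (i j : ℕ) : (⇑(Equiv.swap i j) : Function.End ℕ) ∈ richSg :=
  mem_richSg_of_genset (Or.inr (Or.inl ⟨i, j, rfl⟩))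

lemma suc_mem : suc ∈ richSg := mem_richSg_of_genset (Or.inr (Or.inr (Or.inl rfl)))

lemma pred_mem : pred ∈ richSg := mem_richSg_of_genset (Or.inr (Or.inr (Or.inr rfl)))

lemma shf_mem : ∀ τ ∈ richSg, shf τ ∈ richSg := by
  intro τ hτ
  induction hτ using Subsemigroup.closure_induction with
  | mem f hf =>
    rcases hf with ⟨i, j, rfl⟩ | ⟨i, j, rfl⟩ | rfl | rfl
    · have : shf (repl i j) = repl (i + 1) (j + 1) := by
        funext k
        rcases k with _ | m
        · simp [shf, repl]
        · simp only [shf, repl, Nat.succ_ne_zero, if_false, Nat.add_sub_cancel]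
          by_cases h : m = i
          · simp [h]
          · simp [h, fun hh => h (Nat.succ_injective hh)]
      rw [this]; exact repl_mem _ _
    · have : shf (⇑(Equiv.swap i j)) = ⇑(Equiv.swap (i + 1) (j + 1)) := by
        funext k
        rcases k with _ | m
        · simp [shf, Equiv.swap_apply_def]
        · simp only [shf, Nat.succ_ne_zero, if_false, Nat.add_sub_cancel,
            Equiv.swap_apply_def]
          by_cases h1 : m = i
          · simp [h1]
          · by_cases h2 : m = j
            · simp [h2, apply_ite (· + 1), fun hh => h1 (Nat.succ_injective hh)]
            · simp [h1, h2, fun hh => h1 (Nat.succ_injective hh),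
                fun hh => h2 (Nat.succ_injective hh)]
      rw [this]; exact swap_mem _ _
    · have : shf suc = repl 1 0 * suc := by
        funext k
        rcases k with _ | m
        · simp [shf, repl, suc, Function.End.mul_def, Function.comp]
        · simp [shf, repl, suc, Function.End.mul_def, Function.comp]
      rw [this]; exact mul_mem (repl_mem _ _) suc_mem
    · have : shf pred = pred * repl 1 2 := by
        funext k
        rcases k with _ | m
        · simp [shf, repl, pred, Function.End.mul_def, Function.comp]
        · rcases m with _ | n
          · simp [shf, repl, pred, Function.End.mul_def, Function.comp]
          · simp [shf, repl, pred, Function.End.mul_def, Function.comp]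
      rw [this]; exact mul_mem pred_mem (repl_mem _ _)
  | mul f g _ _ hf hg =>
    rw [shf_mul]; exact mul_mem hf hg

lemma update_formula (τ : Function.End ℕ) (i j : ℕ) :
    (Function.update τ i j : Function.End ℕ) =
      pred * (repl 0 (j + 1) * (shf τ * (repl (i + 1) 0 * suc))) := by
  funext k
  show Function.update τ i j k = pred (repl 0 (j + 1) (shf τ (repl (i + 1) 0 (suc k))))
  simp only [Function.End.mul_def, Function.comp_apply, suc, pred, repl, shf]
  by_cases h : k = i
  · subst h; simp [Function.update]
  · have hki : k + 1 ≠ i + 1 := fun hh => h (Nat.succ_injective hh)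
    simp [hki, Nat.succ_ne_zero, Function.update, h]

/-- This semigroup is rich: closed under τ ↦ τ[i|j]; contains σ = suc, π = pred
with π ∘ σ = Id and Rg σ ≠ ω; and closed under τ ↦ (σ ∘ τ ∘ π)[(ω ∖ Rg σ)|Id].
(Here ω ∖ Rg suc = {0}.) -/
theorem richSg_is_rich :
    (∀ τ ∈ richSg, ∀ i j : ℕ, (Function.update τ i j : Function.End ℕ) ∈ richSg) ∧
    (suc ∈ richSg ∧ pred ∈ richSg ∧ (pred ∘ suc : ℕ → ℕ) = id ∧
      Set.range (suc : ℕ → ℕ) ≠ Set.univ) ∧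
    (∀ τ ∈ richSg,
      ((fun k => if k = 0 then k else (suc ∘ τ ∘ pred) k) : Function.End ℕ) ∈ richSg) := by
  refine ⟨?_, ⟨suc_mem, pred_mem, ?_, ?_⟩, ?_⟩
  · intro τ hτ i j
    rw [update_formula]
    exact mul_mem pred_mem (mul_mem (repl_mem _ _)
      (mul_mem (shf_mem τ hτ) (mul_mem (repl_mem _ _) suc_mem)))
  · funext k; simp [suc, pred, Function.comp]
  · intro h
    have : (0 : ℕ) ∈ Set.range (suc : ℕ → ℕ) := by rw [h]; trivial
    obtain ⟨n, hn⟩ := this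
    exact Nat.succ_ne_zero n hn
  · intro τ hτ
    have : ((fun k => if k = 0 then k else (suc ∘ τ ∘ pred) k) : Function.End ℕ) = shf τ := by
      funext k
      rcases k with _ | m
      · simp [shf]
      · simp [shf, suc, pred, Nat.succ_ne_zero, Function.comp]
    rw [this]
    exact shf_mem τ hτ
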